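/- Suppose an operator X: ℝ^{k×p} → ℝ^N is linear, and an error matrix Δ satisfies (1/(2N))‖X(Δ)‖₂² ≥ κ‖Δ‖_F² for some κ > 0, together with the inequalities (1/(2N))‖X(Δ)‖₂² ≤ 2λ‖Δ‖_* and ‖Δ‖_* ≤ 4√(2r)·‖Δ‖_F + 4ρ for some λ, ρ ≥ 0 and integer r ≥ 1. Then ‖Δ‖_F ≤ max{ 32λ√r / κ, (16λρ/κ)^{1/2} }. -/

import Mathlib

open Matrix BigOperators

noncomputable def frobNorm {k p : ℕ} (A : Matrix (Fin k) (Fin p) ℝ) : ℝ :=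
  Real.sqrt (∑ i, ∑ j, (A i j) ^ 2)

noncomputable def singVal {k p : ℕ} (A : Matrix (Fin k) (Fin p) ℝ) (i : Fin p) : ℝ :=
  Real.sqrt ((show (Aᵀ * A).IsHermitian by
    rw [Matrix.IsHermitian, Matrix.conjTranspose_eq_transpose_of_trivial, Matrix.transpose_mul,
      Matrix.transpose_transpose]).eigenvalues i)

noncomputable def nuclearNorm {k p : ℕ} (A : Matrix (Fin k) (Fin p) ℝ) : ℝ :=
  ∑ i, singVal A i

noncomputable def opNorm {k p : ℕ} (A : Matrix (Fin k) (Fin p) ℝ) : ℝ :=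
  ⨆ i, singVal A i

noncomputable def euclNorm {n : ℕ} (v : Fin n → ℝ) : ℝ :=
  Real.sqrt (∑ i, (v i) ^ 2)

theorem stmt_4 {k p N : ℕ}
    (X : Matrix (Fin k) (Fin p) ℝ →ₗ[ℝ] (Fin N → ℝ))
    (Δ : Matrix (Fin k) (Fin p) ℝ)
    (κ lam ρ : ℝ) (r : ℕ) (hκ : 0 < κ) (hlam : 0 ≤ lam) (hρ : 0 ≤ ρ) (hrr : 1 ≤ r)
    (h1 : κ * frobNorm Δ ^ 2 ≤ (1 / (2 * N)) * euclNorm (X Δ) ^ 2)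
    (h2 : (1 / (2 * N)) * euclNorm (X Δ) ^ 2 ≤ 2 * lam * nuclearNorm Δ)
    (h3 : nuclearNorm Δ ≤ 4 * Real.sqrt (2 * r) * frobNorm Δ + 4 * ρ) :
    frobNorm Δ ≤ max (32 * lam * Real.sqrt r / κ) (Real.sqrt (16 * lam * ρ / κ)) := by
  set F := frobNorm Δ with hF
  have hF0 : 0 ≤ F := Real.sqrt_nonneg _
  have key : κ * F ^ 2 ≤ 8 * lam * Real.sqrt (2 * r) * F + 8 * lam * ρ := by
    have := h1.trans h2
    have h4 : 2 * lam * nuclearNorm Δ ≤ 2 * lam * (4 * Real.sqrt (2 * r) * F + 4 * ρ) := by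
      apply mul_le_mul_of_nonneg_left h3 (by linarith)
    nlinarith [this, h4]
  by_cases hc : F ≤ Real.sqrt (16 * lam * ρ / κ)
  · exact le_max_of_le_right hc
  · push_neg at hc
    apply le_max_of_le_left
    have hsq : 16 * lam * ρ / κ < F ^ 2 := by
      have h0 : 0 ≤ 16 * lam * ρ / κ := by positivity
      calc 16 * lam * ρ / κ = Real.sqrt (16 * lam * ρ / κ) ^ 2 := (Real.sq_sqrt h0).symm
        _ < F ^ 2 := by
          apply pow_lt_pow_left₀ hc (Real.sqrt_nonneg _) (by norm_num)
    have h8 : 8 * lam * ρ < κ * F ^ 2 / 2 := by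
      rw [div_lt_iff₀ hκ] at hsq; nlinarith
    have hFpos : 0 < F := lt_of_le_of_lt (Real.sqrt_nonneg _) hc
    have hstep : κ * F ≤ 16 * lam * Real.sqrt (2 * r) := by
      nlinarith [key, h8]
    have hsqrt : Real.sqrt (2 * r) ≤ 2 * Real.sqrt r := by
      rw [show (2 : ℝ) * r = 2 * r from rfl]
      have : Real.sqrt (2 * r) = Real.sqrt 2 * Real.sqrt r := Real.sqrt_mul (by norm_num) _
      rw [this]
      have h2le : Real.sqrt 2 ≤ 2 := by
        nlinarith [Real.sq_sqrt (by norm_num : (0:ℝ) ≤ 2), Real.sqrt_nonneg 2]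
      exact mul_le_mul_of_nonneg_right h2le (Real.sqrt_nonneg _)
    rw [le_div_iff₀ hκ]
    calc F * κ = κ * F := mul_comm _ _
      _ ≤ 16 * lam * Real.sqrt (2 * r) := hstep
      _ ≤ 32 * lam * Real.sqrt r := by nlinarith [Real.sqrt_nonneg (r:ℝ), hsqrt]
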